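/- arXiv:1411.7046 — 4 statements merged into one kernel-verified Lean document; each statement's English description precedes it below -/
import Mathlib

section
/- The set of real numbers of the form ln(b^2 - c^2)/ln(b), where b and c range over positive integers with b - c even and positive, is dense in the open interval (1, 2), and every such number lies in (1, 2). -/
/-- The set of Hausdorff dimensions `log(b² - c²)/log b` of Sierpinski carpets
`SC(b,c)`, where `b, c` are positive integers with `b - c` even and positive. -/
def sierpinskiDims : Set ℝ :=
  {x | ∃ b c : ℕ, 0 < c ∧ c < b ∧ Even (b - c) ∧
    x = Real.log ((b : ℝ) ^ 2 - (c : ℝ) ^ 2) / Real.log b}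

lemma sierpinskiDims_subset : sierpinskiDims ⊆ Set.Ioo (1 : ℝ) 2 := by
  rintro x ⟨b, c, hc, hcb, heven, rfl⟩
  have hbc2 : c + 2 ≤ b := by
    rcases heven with ⟨r, hr⟩
    omega
  have hb3 : 3 ≤ b := by omega
  have hbR : (3:ℝ) ≤ b := by exact_mod_cast hb3
  have hlogb : 0 < Real.log b := Real.log_pos (by linarith)
  have hcR : (1:ℝ) ≤ c := by exact_mod_cast hc
  have hcbR : (c:ℝ) + 2 ≤ b := by exact_mod_cast hbc2
  have h1 : (b:ℝ) < (b:ℝ)^2 - (c:ℝ)^2 := by nlinarith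
  have h2 : (b:ℝ)^2 - (c:ℝ)^2 < (b:ℝ)^2 := by nlinarith
  constructor
  · rw [one_lt_div hlogb]
    exact Real.log_lt_log (by linarith) h1
  · rw [div_lt_iff₀ hlogb]
    have : Real.log ((b:ℝ)^2) = 2 * Real.log b := by
      rw [Real.log_pow]; push_cast; ring
    rw [← this]
    exact Real.log_lt_log (by linarith) h2

/-- **Achievable Sierpinski carpet dimensions are dense in `(1,2)`.**
Every number `log(b² - c²)/log b` with `b, c` positive integers, `b - c` even and
positive, lies in the open interval `(1, 2)`, and the set of all such numbers is
dense in `(1, 2)`. -/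
theorem sierpinskiDims_subset_Ioo_and_dense :
    sierpinskiDims ⊆ Set.Ioo (1 : ℝ) 2 ∧
      ∀ x ∈ Set.Ioo (1 : ℝ) 2, x ∈ closure sierpinskiDims := by
  refine ⟨sierpinskiDims_subset, ?_⟩
  rintro x ⟨hx1, hx2⟩
  rw [Metric.mem_closure_iff]
  intro ε hε
  -- choose a large base b
  have h1 : Filter.Tendsto (fun n : ℕ => (n:ℝ)^(x-1)) Filter.atTop Filter.atTop :=
    (tendsto_rpow_atTop (by linarith)).comp tendsto_natCast_atTop_atTop
  have h2 : Filter.Tendsto (fun n : ℕ => (n:ℝ)^(2-x)) Filter.atTop Filter.atTop :=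
    (tendsto_rpow_atTop (by linarith)).comp tendsto_natCast_atTop_atTop
  have h3 : Filter.Tendsto (fun n : ℕ => Real.log n) Filter.atTop Filter.atTop :=
    Real.tendsto_log_atTop.comp tendsto_natCast_atTop_atTop
  have hev : ∀ᶠ n : ℕ in Filter.atTop,
      (4 ≤ (n:ℝ)^(x-1) ∧ 2 ≤ (n:ℝ)^(2-x)) ∧ Real.log 2 / ε < Real.log n ∧ 2 ≤ n := by
    filter_upwards [h1.eventually_ge_atTop 4, h2.eventually_ge_atTop 2,
      h3.eventually_gt_atTop (Real.log 2 / ε), Filter.eventually_ge_atTop 2] with n a b c d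
    exact ⟨⟨a, b⟩, c, d⟩
  obtain ⟨b, ⟨hA4, hB2x⟩, hblog, hb2⟩ := hev.exists
  set B : ℝ := (b:ℝ) with hBdef
  set A : ℝ := B^(x-1) with hAdef
  have hB2 : (2:ℝ) ≤ B := by rw [hBdef]; exact_mod_cast hb2
  have hBpos : (0:ℝ) < B := by linarith
  have hApos : (0:ℝ) < A := by linarith
  have hlogB : 0 < Real.log B := Real.log_pos (by linarith)
  -- A ≤ B/2
  have hAB : A * B^(2-x) = B := by
    rw [hAdef, ← Real.rpow_add hBpos]
    norm_num
  have hAle : A ≤ B/2 := by nlinarith [Real.rpow_pos_of_pos hBpos (2-x)]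
  -- define k
  set k : ℕ := ⌈A/4⌉₊ with hkdef
  have hkA : A/4 ≤ (k:ℝ) := Nat.le_ceil _
  have hkU : (k:ℝ) < A/4 + 1 := Nat.ceil_lt_add_one (by positivity)
  have hkU2 : (k:ℝ) < A/2 := by linarith
  have hk1 : 1 ≤ k := Nat.one_le_iff_ne_zero.mpr (by
    intro h
    rw [h] at hkA
    simp at hkA
    linarith)
  have h2kb : 2 * k < b := by
    have h : ((2*k:ℕ):ℝ) < (b:ℝ) := by push_cast; rw [← hBdef]; linarith
    exact_mod_cast h
  set c : ℕ := b - 2*k with hcdef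
  have hc0 : 0 < c := by omega
  have hcb : c < b := by omega
  have heven : Even (b - c) := ⟨k, by omega⟩
  have hcR : (c:ℝ) = B - 2*k := by
    rw [hcdef]; push_cast [Nat.cast_sub (le_of_lt h2kb)]; ring
  -- m = b² - c² = 4k(B-k)
  have hm : B^2 - (c:ℝ)^2 = 4*(k:ℝ)*(B - k) := by rw [hcR]; ring
  have hBx : A * B = B^x := by
    rw [hAdef, ← Real.rpow_add_one (ne_of_gt hBpos)]
    norm_num
  have hBxpos : (0:ℝ) < B^x := Real.rpow_pos_of_pos hBpos x
  have hBk : B/2 ≤ B - k := by linarith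
  have hmlow : B^x/2 ≤ 4*(k:ℝ)*(B - k) := by nlinarith
  have hmup : 4*(k:ℝ)*(B - k) ≤ 2 * B^x := by nlinarith
  have hmpos : 0 < 4*(k:ℝ)*(B - k) := by linarith
  -- log bounds
  have hlog1 : Real.log (B^x/2) = x * Real.log B - Real.log 2 := by
    rw [Real.log_div (ne_of_gt hBxpos) two_ne_zero, Real.log_rpow hBpos]
  have hlog2 : Real.log (2 * B^x) = Real.log 2 + x * Real.log B := by
    rw [Real.log_mul two_ne_zero (ne_of_gt hBxpos), Real.log_rpow hBpos]
  have hll : x * Real.log B - Real.log 2 ≤ Real.log (4*(k:ℝ)*(B - k)) := by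
    rw [← hlog1]
    exact Real.log_le_log (by positivity) hmlow
  have hlu : Real.log (4*(k:ℝ)*(B - k)) ≤ Real.log 2 + x * Real.log B := by
    rw [← hlog2]
    exact Real.log_le_log hmpos hmup
  -- conclude
  refine ⟨Real.log (B^2 - (c:ℝ)^2) / Real.log B, ⟨b, c, hc0, hcb, heven, rfl⟩, ?_⟩
  rw [Real.dist_eq, hm]
  have hl2pos : 0 < Real.log 2 := Real.log_pos (by norm_num)
  have hεlog : Real.log 2 / Real.log B < ε := by
    rw [div_lt_iff₀ hlogB]
    rw [div_lt_iff₀ hε] at hblog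
    linarith
  rw [abs_sub_lt_iff]
  constructor
  · rw [sub_lt_iff_lt_add]
    have : Real.log (4*(k:ℝ)*(B - k)) / Real.log B ≥ x - Real.log 2 / Real.log B := by
      rw [ge_iff_le, sub_le_iff_le_add, ← add_div, le_div_iff₀ hlogB]
      linarith
    linarith
  · rw [sub_lt_iff_lt_add]
    have : Real.log (4*(k:ℝ)*(B - k)) / Real.log B ≤ x + Real.log 2 / Real.log B := by
      rw [div_le_iff₀ hlogB, add_mul, div_mul_cancel₀ _ (ne_of_gt hlogB)]
      linarith
    linarith
end

section
/- Second GKS inequality: for a generalized Ising model with ferromagnetic couplings J_R ≥ 0 on a finite spin set Λ, and any subsets A, B ⊆ Λ, the thermal expectations satisfy ⟨σ_A σ_B⟩ ≥ ⟨σ_A⟩⟨σ_B⟩, where σ_A = ∏_{j∈A} σ_j. -/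
variable {Λ : Type*}

/-- The value `±1` of the spin at site `j` in configuration `s`. -/
def spin (s : Λ → Bool) (j : Λ) : ℝ := if s j then 1 else -1

/-- The product `σ_A = ∏_{j ∈ A} σ_j` of the spins in `A`. -/
def spinProd (A : Finset Λ) (s : Λ → Bool) : ℝ := ∏ j ∈ A, spin s j

variable [Fintype Λ] [DecidableEq Λ]

/-- Generalized Ising Hamiltonian `H(σ) = -Σ_R J_R σ_R` with couplings `J`. -/
def isingHamiltonian (J : Finset Λ → ℝ) (s : Λ → Bool) : ℝ :=
  -∑ R : Finset Λ, J R * spinProd R s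

/-- Gibbs (thermal) expectation `⟨f⟩ = Σ_σ f(σ) e^{-βH(σ)} / Σ_σ e^{-βH(σ)}`. -/
noncomputable def gibbsExpect (β : ℝ) (J : Finset Λ → ℝ) (f : (Λ → Bool) → ℝ) : ℝ :=
  (∑ s : Λ → Bool, f s * Real.exp (-β * isingHamiltonian J s)) /
    ∑ s : Λ → Bool, Real.exp (-β * isingHamiltonian J s)

lemma spin_mul_self (s : Λ → Bool) (j : Λ) : spin s j * spin s j = 1 := by
  unfold spin; split <;> norm_num

lemma spinProd_mul_self (A : Finset Λ) (s : Λ → Bool) :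
    spinProd A s * spinProd A s = 1 := by
  rw [spinProd, ← Finset.prod_mul_distrib]
  exact Finset.prod_eq_one fun j _ => spin_mul_self s j

lemma spinProd_eq_one_or (A : Finset Λ) (s : Λ → Bool) :
    spinProd A s = 1 ∨ spinProd A s = -1 :=
  mul_self_eq_one_iff.mp (spinProd_mul_self A s)

lemma spinProd_le_one (A : Finset Λ) (s : Λ → Bool) : spinProd A s ≤ 1 := by
  rcases spinProd_eq_one_or A s with h | h <;> rw [h] <;> norm_num

lemma neg_one_le_spinProd (A : Finset Λ) (s : Λ → Bool) : -1 ≤ spinProd A s := by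
  rcases spinProd_eq_one_or A s with h | h <;> rw [h] <;> norm_num


lemma spinProd_mul (A B : Finset Λ) (s : Λ → Bool) :
    spinProd A s * spinProd B s = spinProd (symmDiff A B) s := by
  have hA : spinProd (A \ B) s * spinProd (A ∩ B) s = spinProd A s := by
    have e : A \ B = A \ (A ∩ B) := (Finset.sdiff_inter_self_left A B).symm
    rw [spinProd, spinProd, spinProd, e]
    exact Finset.prod_sdiff Finset.inter_subset_left
  have hB : spinProd (B \ A) s * spinProd (A ∩ B) s = spinProd B s := by
    have e : B \ A = B \ (A ∩ B) := by
      rw [Finset.inter_comm]; exact (Finset.sdiff_inter_self_left B A).symm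
    rw [spinProd, spinProd, spinProd, e]
    exact Finset.prod_sdiff Finset.inter_subset_right
  have hD : spinProd (symmDiff A B) s = spinProd (A \ B) s * spinProd (B \ A) s := by
    rw [spinProd, spinProd, spinProd, symmDiff_def, Finset.sup_eq_union,
      Finset.prod_union disjoint_sdiff_sdiff]
  have h2 := spinProd_mul_self (A ∩ B) s
  rw [← hA, ← hB, hD]
  linear_combination (spinProd (A \ B) s * spinProd (B \ A) s) * h2


lemma sum_spinProd_nonneg (S : Finset Λ) : 0 ≤ ∑ s : Λ → Bool, spinProd S s := by
  have h : ∀ s : Λ → Bool, spinProd S s = ∏ j : Λ, (if j ∈ S then spin s j else 1) := by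
    intro s
    rw [spinProd, ← Finset.prod_filter, Finset.filter_mem_eq_inter, Finset.univ_inter]
  calc (0:ℝ) ≤ ∏ j : Λ, ∑ b : Bool, (if j ∈ S then spin (fun _ => b) j else 1) := by
        apply Finset.prod_nonneg
        intro j _
        by_cases hj : j ∈ S <;> simp [hj, spin]
    _ = ∑ s : Λ → Bool, spinProd S s := by
        rw [Finset.prod_univ_sum]
        rw [Fintype.piFinset_univ]
        apply Finset.sum_congr rfl
        intro s _
        rw [h s]
        apply Finset.prod_congr rfl
        intro j _
        by_cases hj : j ∈ S <;> simp [hj, spin]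

lemma exists_spinProd (C : Finset Λ) (T : Finset (Finset Λ)) :
    ∃ D : Finset Λ, ∀ s : Λ → Bool, spinProd C s * ∏ R ∈ T, spinProd R s = spinProd D s := by
  induction T using Finset.induction_on generalizing C with
  | empty => exact ⟨C, fun s => by simp⟩
  | @insert R T' hR ih =>
    obtain ⟨D, hD⟩ := ih (symmDiff C R)
    refine ⟨D, fun s => ?_⟩
    rw [Finset.prod_insert hR, ← hD s, ← spinProd_mul]
    ring

/-- GKS I, unnormalized form. -/
lemma gks1 (K : Finset Λ → ℝ) (hK : ∀ R, 0 ≤ K R) (C : Finset Λ) :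
    0 ≤ ∑ s : Λ → Bool, spinProd C s * Real.exp (∑ R : Finset Λ, K R * spinProd R s) := by
  have hexp : ∀ s : Λ → Bool, Real.exp (∑ R : Finset Λ, K R * spinProd R s)
      = ∏ R : Finset Λ, (spinProd R s * Real.sinh (K R) + Real.cosh (K R)) := by
    intro s
    rw [Real.exp_sum]
    refine Finset.prod_congr rfl fun R _ => ?_
    rcases spinProd_eq_one_or R s with h | h <;> rw [h]
    · rw [mul_one, one_mul, add_comm, Real.cosh_add_sinh]
    · rw [mul_neg_one, ← Real.cosh_sub_sinh]; ring
  simp_rw [hexp, Finset.prod_add, Finset.mul_sum]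
  rw [Finset.sum_comm]
  apply Finset.sum_nonneg
  intro T _
  obtain ⟨D, hD⟩ := exists_spinProd C T
  have : ∀ s : Λ → Bool,
      spinProd C s * ((∏ R ∈ T, spinProd R s * Real.sinh (K R)) *
        ∏ R ∈ Finset.univ \ T, Real.cosh (K R))
      = spinProd D s * ((∏ R ∈ T, Real.sinh (K R)) * ∏ R ∈ Finset.univ \ T, Real.cosh (K R)) := by
    intro s
    rw [Finset.prod_mul_distrib, ← hD s]
    ring
  simp_rw [this, ← Finset.sum_mul]
  apply mul_nonneg (sum_spinProd_nonneg D)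
  apply mul_nonneg
  · exact Finset.prod_nonneg fun R _ => by have := hK R; positivity
  · exact Finset.prod_nonneg fun R _ => (Real.cosh_pos _).le

lemma spin_beq (s q : Λ → Bool) (j : Λ) :
    spin (fun i => s i == q i) j = spin s j * spin q j := by
  cases hs : s j <;> cases hq : q j <;> simp [spin, hs, hq]

lemma spinProd_beq (B : Finset Λ) (s q : Λ → Bool) :
    spinProd B (fun i => s i == q i) = spinProd B s * spinProd B q := by
  rw [spinProd, spinProd, spinProd, ← Finset.prod_mul_distrib]
  exact Finset.prod_congr rfl fun j _ => spin_beq s q j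

lemma beq_involutive (s : Λ → Bool) :
    Function.Involutive (fun q : Λ → Bool => fun i => s i == q i) := by
  intro q
  funext j
  cases hs : s j <;> cases hq : q j <;> simp [hs, hq]

/-- GKS II, unnormalized form. -/
lemma gks2_key (K : Finset Λ → ℝ) (hK : ∀ R, 0 ≤ K R) (A B : Finset Λ) :
    (∑ s : Λ → Bool, spinProd A s * Real.exp (∑ R : Finset Λ, K R * spinProd R s)) *
      (∑ s : Λ → Bool, spinProd B s * Real.exp (∑ R : Finset Λ, K R * spinProd R s))
    ≤ (∑ s : Λ → Bool, spinProd A s * spinProd B s *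
          Real.exp (∑ R : Finset Λ, K R * spinProd R s)) *
      (∑ s : Λ → Bool, Real.exp (∑ R : Finset Λ, K R * spinProd R s)) := by
  set w : (Λ → Bool) → ℝ := fun s => Real.exp (∑ R : Finset Λ, K R * spinProd R s) with hw
  rw [← sub_nonneg]
  have e1 : (∑ s : Λ → Bool, spinProd A s * spinProd B s * w s) * (∑ s : Λ → Bool, w s)
      - (∑ s : Λ → Bool, spinProd A s * w s) * (∑ s : Λ → Bool, spinProd B s * w s)
      = ∑ s : Λ → Bool, ∑ t : Λ → Bool,
          (spinProd A s * spinProd B s * w s * w t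
            - spinProd A s * w s * (spinProd B t * w t)) := by
    rw [Finset.sum_mul_sum, Finset.sum_mul_sum, ← Finset.sum_sub_distrib]
    exact Finset.sum_congr rfl fun s _ => (Finset.sum_sub_distrib _ _).symm
  rw [e1]
  -- reindex the inner sum by t = (fun i => s i == q i)
  have e2 : ∀ s : Λ → Bool,
      (∑ t : Λ → Bool, (spinProd A s * spinProd B s * w s * w t
          - spinProd A s * w s * (spinProd B t * w t)))
      = ∑ q : Λ → Bool, spinProd (symmDiff A B) s * ((1 - spinProd B q) *
          Real.exp (∑ R : Finset Λ, (K R * (1 + spinProd R q)) * spinProd R s)) := by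
    intro s
    rw [← Equiv.sum_comp ((beq_involutive s).toPerm _)]
    apply Finset.sum_congr rfl
    intro q _
    have htoPerm : ((beq_involutive s).toPerm _) q = fun i => s i == q i := rfl
    rw [htoPerm]
    have hws : w s * w (fun i => s i == q i)
        = Real.exp (∑ R : Finset Λ, (K R * (1 + spinProd R q)) * spinProd R s) := by
      rw [hw]
      simp only []
      rw [← Real.exp_add, ← Finset.sum_add_distrib]
      congr 1
      apply Finset.sum_congr rfl
      intro R _
      rw [spinProd_beq]
      ring
    rw [spinProd_beq, ← hws, ← spinProd_mul]
    ring
  simp_rw [e2]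
  rw [Finset.sum_comm]
  apply Finset.sum_nonneg
  intro q _
  have e3 : ∀ x : Λ → Bool, spinProd (symmDiff A B) x * ((1 - spinProd B q) *
        Real.exp (∑ R : Finset Λ, (K R * (1 + spinProd R q)) * spinProd R x))
      = (1 - spinProd B q) * (spinProd (symmDiff A B) x *
        Real.exp (∑ R : Finset Λ, (K R * (1 + spinProd R q)) * spinProd R x)) := fun x => by ring
  simp_rw [e3]
  rw [← Finset.mul_sum]
  apply mul_nonneg
  · linarith [spinProd_le_one B q]
  · exact gks1 (fun R => K R * (1 + spinProd R q))
      (fun R => mul_nonneg (hK R) (by linarith [neg_one_le_spinProd R q])) _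

/-- **Second GKS inequality.** For a generalized Ising model with ferromagnetic
couplings `J_R ≥ 0` on a finite spin set `Λ`, and any `A, B ⊆ Λ`,
`⟨σ_A σ_B⟩ ≥ ⟨σ_A⟩⟨σ_B⟩`. -/
theorem gks_second_inequality {Λ : Type*} [Fintype Λ] [DecidableEq Λ]
    (J : Finset Λ → ℝ) (hJ : ∀ R, 0 ≤ J R) (β : ℝ) (hβ : 0 < β) (A B : Finset Λ) :
    gibbsExpect β J (fun s => spinProd A s * spinProd B s)
      ≥ gibbsExpect β J (spinProd A) * gibbsExpect β J (spinProd B) := by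
  have hE : ∀ s : Λ → Bool, Real.exp (-β * isingHamiltonian J s)
      = Real.exp (∑ R : Finset Λ, (β * J R) * spinProd R s) := by
    intro s
    congr 1
    rw [isingHamiltonian, neg_mul_neg, Finset.mul_sum]
    exact Finset.sum_congr rfl fun R _ => by ring
  have key : (∑ s : Λ → Bool, spinProd A s * Real.exp (∑ R : Finset Λ, (β * J R) * spinProd R s)) *
      (∑ s : Λ → Bool, spinProd B s * Real.exp (∑ R : Finset Λ, (β * J R) * spinProd R s))
      ≤ (∑ s : Λ → Bool, spinProd A s * spinProd B s *
          Real.exp (∑ R : Finset Λ, (β * J R) * spinProd R s)) *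
        (∑ s : Λ → Bool, Real.exp (∑ R : Finset Λ, (β * J R) * spinProd R s)) := by
    have := gks2_key (fun R => β * J R) (fun R => mul_nonneg hβ.le (hJ R)) A B
    simpa using this
  have hZ : (0:ℝ) < ∑ s : Λ → Bool, Real.exp (∑ R : Finset Λ, (β * J R) * spinProd R s) :=
    Finset.sum_pos (fun s _ => Real.exp_pos _) Finset.univ_nonempty
  rw [gibbsExpect, gibbsExpect, gibbsExpect]
  simp only [hE]
  rw [ge_iff_le, div_mul_div_comm, div_le_div_iff₀ (by positivity) hZ]
  nlinarith [mul_le_mul_of_nonneg_right key hZ.le]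
end

section
/- Merlini–Gruber duality of partition functions: let (Λ, K) be a finite generalized Ising model with interaction supports B ∈ 𝓑 and couplings K_B > 0, and let (Λ*, K*) be the dual model constructed from a generating set of the constraint group, with e^{-2K*_{B*}} = ∏_{B ∈ φ^{-1}(B*)} tanh K_B. Then Z(Λ, K) = 2^{(|Λ| - |Λ*| + N_S - N_{S*})/2} · ∏_{B∈𝓑} (sinh 2K_B)^{1/2} · Z(Λ*, K*). -/
/-- Partition function of a generalized Ising model with interaction supports `𝓑`
and couplings `K`: `Z = Σ_{R ⊆ Λ} exp(Σ_{B ∈ 𝓑} K_B (-1)^{|R ∩ B|})`, where `R`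
is the set of down spins. -/
noncomputable def isingZ {Λ : Type*} [Fintype Λ] [DecidableEq Λ]
    (𝓑 : Finset (Finset Λ)) (K : Finset Λ → ℝ) : ℝ :=
  ∑ R : Finset Λ, Real.exp (∑ B ∈ 𝓑, K B * (-1 : ℝ) ^ ((R ∩ B).card))

open Finset
open scoped symmDiff
namespace MerlGru

variable {α : Type*} [DecidableEq α]

lemma sum_powerset_prod {R : Type*} [CommRing R] (s : Finset α) (x : α → R) :
    ∑ C ∈ s.powerset, ∏ B ∈ C, x B = ∏ B ∈ s, (1 + x B) := by
  have := Finset.prod_add x (fun _ => (1 : R)) s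
  simpa [add_comm] using this.symm

lemma zmod2_natCast_eq (n : ℕ) : (n : ZMod 2) = if Odd n then 1 else 0 := by
  rw [← ZMod.natCast_mod n 2]
  rcases Nat.even_or_odd n with h | h
  · simp [Nat.even_iff.mp h, Nat.not_odd_iff_even.mpr h]
  · simp [Nat.odd_iff.mp h, h]

lemma even_iff_zmod2 (n : ℕ) : Even n ↔ (n : ZMod 2) = 0 := by
  rw [zmod2_natCast_eq]
  rcases Nat.even_or_odd n with h | h
  · simp [h, Nat.not_odd_iff_even.mpr h]
  · simp [h, Nat.not_even_iff_odd.mpr h]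

lemma odd_iff_zmod2 (n : ℕ) : Odd n ↔ (n : ZMod 2) = 1 := by
  rw [zmod2_natCast_eq]
  rcases Nat.even_or_odd n with h | h
  · simp [h, Nat.not_odd_iff_even.mpr h]
  · simp [h]

lemma zmod2_card_filter_odd (s : Finset α) (f : α → ℕ) :
    (((s.filter fun a => Odd (f a)).card : ZMod 2)) = ∑ a ∈ s, (f a : ZMod 2) := by
  rw [Finset.card_filter, Nat.cast_sum]
  refine Finset.sum_congr rfl fun a _ => ?_
  rw [zmod2_natCast_eq (f a)]
  split <;> simp

lemma zmod2_card_symmDiff (s t : Finset α) :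
    (((s ∆ t).card : ZMod 2)) = (s.card : ZMod 2) + t.card := by
  have h1 : (s ∆ t).card = (s \ t).card + (t \ s).card := by
    have hst : s ∆ t = (s \ t) ∪ (t \ s) := by
      ext a; simp [Finset.mem_symmDiff]
    rw [hst, Finset.card_union_of_disjoint (disjoint_sdiff_sdiff)]
  have h2 := Finset.card_sdiff_add_card_inter s t
  have h3 := Finset.card_sdiff_add_card_inter t s
  have h4 : (s ∩ t).card = (t ∩ s).card := by rw [Finset.inter_comm]
  have h5 : ((s ∆ t).card + 2 * (s ∩ t).card : ℕ) = (s.card + t.card : ℕ) := by omega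
  have h6 : ((s ∆ t).card : ZMod 2) + 2 * ((s ∩ t).card : ZMod 2)
      = (s.card : ZMod 2) + t.card := by exact_mod_cast congrArg (Nat.cast : ℕ → ZMod 2) h5
  simpa [show (2 : ZMod 2) = 0 by decide] using h6

lemma sqrt_prod' {ι : Type*} (s : Finset ι) (f : ι → ℝ) (h : ∀ i ∈ s, 0 ≤ f i) :
    Real.sqrt (∏ i ∈ s, f i) = ∏ i ∈ s, Real.sqrt (f i) := by
  classical
  induction s using Finset.cons_induction with
  | empty => simp
  | cons a s ha ih =>
    rw [Finset.prod_cons, Finset.prod_cons,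
      Real.sqrt_mul (h a (Finset.mem_cons_self a s)),
      ih (fun i hi => h i (Finset.mem_cons_of_mem hi))]

lemma exp_mul_neg_one_pow (K' : ℝ) (n : ℕ) :
    Real.exp (K' * (-1 : ℝ) ^ n) = Real.cosh K' * (1 + (-1 : ℝ) ^ n * Real.tanh K') := by
  have hc : Real.cosh K' ≠ 0 := (Real.cosh_pos K').ne'
  have hs : Real.cosh K' * (Real.sinh K' / Real.cosh K') = Real.sinh K' := by
    field_simp
  rcases Nat.even_or_odd n with h | h
  · rw [h.neg_one_pow, mul_one, one_mul, Real.tanh_eq_sinh_div_cosh, mul_add, mul_one,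
      hs, Real.cosh_add_sinh]
  · rw [h.neg_one_pow, mul_neg_one, neg_one_mul, Real.tanh_eq_sinh_div_cosh, mul_add,
      mul_one, mul_neg, hs, ← Real.cosh_sub_sinh, sub_eq_add_neg]

set_option linter.unusedSectionVars false

section s2
variable {Λ : Type*} [Fintype Λ] [DecidableEq Λ]

lemma prod_sign_swap (R : Finset Λ) (C : Finset (Finset Λ)) :
    ∏ B ∈ C, (-1 : ℝ) ^ ((R ∩ B).card)
      = ∏ j ∈ R, (-1 : ℝ) ^ ((C.filter (fun B => j ∈ B)).card) := by
  rw [Finset.prod_pow_eq_pow_sum, Finset.prod_pow_eq_pow_sum]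
  congr 1
  calc ∑ B ∈ C, (R ∩ B).card
      = ∑ B ∈ C, ∑ j ∈ R, (if j ∈ B then 1 else 0) := by
        refine Finset.sum_congr rfl fun B _ => ?_
        rw [← Finset.filter_mem_eq_inter, Finset.card_filter]
    _ = ∑ j ∈ R, ∑ B ∈ C, (if j ∈ B then 1 else 0) := Finset.sum_comm
    _ = ∑ j ∈ R, (C.filter (fun B => j ∈ B)).card := by
        refine Finset.sum_congr rfl fun j _ => ?_
        rw [Finset.card_filter]

/-- Sum over all spin configurations of a product of signs. -/
lemma sign_sum (C : Finset (Finset Λ)) :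
    ∑ R : Finset Λ, ∏ B ∈ C, (-1 : ℝ) ^ ((R ∩ B).card)
      = if (∀ j : Λ, Even ((C.filter (fun B => j ∈ B)).card))
        then (2 : ℝ) ^ (Fintype.card Λ) else 0 := by
  have h1 : ∑ R : Finset Λ, ∏ B ∈ C, (-1 : ℝ) ^ ((R ∩ B).card)
      = ∑ R ∈ (Finset.univ : Finset Λ).powerset,
          ∏ j ∈ R, (-1 : ℝ) ^ ((C.filter (fun B => j ∈ B)).card) := by
    rw [Finset.powerset_univ]
    exact Finset.sum_congr rfl fun R _ => prod_sign_swap R C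
  rw [h1, sum_powerset_prod]
  by_cases h : ∀ j : Λ, Even ((C.filter (fun B => j ∈ B)).card)
  · rw [if_pos h]
    have : ∀ j ∈ (Finset.univ : Finset Λ),
        (1 : ℝ) + (-1 : ℝ) ^ ((C.filter (fun B => j ∈ B)).card) = 2 := by
      intro j _; rw [(h j).neg_one_pow]; norm_num
    rw [Finset.prod_congr rfl this, Finset.prod_const, Finset.card_univ]
  · rw [if_neg h]
    push_neg at h
    obtain ⟨j, hj⟩ := h
    refine Finset.prod_eq_zero (Finset.mem_univ j) ?_
    rw [(Nat.odd_iff.mpr (Nat.not_even_iff.mp hj)).neg_one_pow]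
    norm_num

/-- Sum over subsets of `𝓑` of products of signs, for fixed `R`. -/
lemma sign_sum' (𝓑 : Finset (Finset Λ)) (R : Finset Λ) :
    ∑ C ∈ 𝓑.powerset, ∏ B ∈ C, (-1 : ℝ) ^ ((R ∩ B).card)
      = if (∀ B ∈ 𝓑, Even ((R ∩ B).card)) then (2 : ℝ) ^ (𝓑.card) else 0 := by
  rw [sum_powerset_prod]
  by_cases h : ∀ B ∈ 𝓑, Even ((R ∩ B).card)
  · rw [if_pos h]
    have : ∀ B ∈ 𝓑, (1 : ℝ) + (-1 : ℝ) ^ ((R ∩ B).card) = 2 := by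
      intro B hB; rw [(h B hB).neg_one_pow]; norm_num
    rw [Finset.prod_congr rfl this, Finset.prod_const]
  · rw [if_neg h]
    push_neg at h
    obtain ⟨B, hB, hodd⟩ := h
    refine Finset.prod_eq_zero hB ?_
    rw [(Nat.odd_iff.mpr (Nat.not_even_iff.mp hodd)).neg_one_pow]
    norm_num

end s2

section s3
variable {Λ : Type*} [Fintype Λ] [DecidableEq Λ]
  {Λstar : Type*} [Fintype Λstar] [DecidableEq Λstar]
  (𝓑 : Finset (Finset Λ)) (Cgen : Λstar → Finset (Finset Λ))

/-- The map sending a dual spin configuration to the constraint it generates. -/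
def psi (T : Finset Λstar) : Finset (Finset Λ) :=
  𝓑.filter (fun B => Odd ((T.filter (fun i => B ∈ Cgen i)).card))

lemma T_filter_eq (T : Finset Λstar) (B : Finset Λ) :
    T.filter (fun i => B ∈ Cgen i) = T ∩ Finset.univ.filter (fun i => B ∈ Cgen i) := by
  ext i; simp

lemma psi_mem (hsub : ∀ i, Cgen i ⊆ 𝓑)
    (hconstraint : ∀ i, ∀ j : Λ, Even (((Cgen i).filter (fun B => j ∈ B)).card))
    (T : Finset Λstar) :
    psi 𝓑 Cgen T ∈ (𝓑.powerset).filter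
      (fun C => ∀ j : Λ, Even ((C.filter (fun B => j ∈ B)).card)) := by
  rw [Finset.mem_filter, Finset.mem_powerset]
  refine ⟨Finset.filter_subset _ _, fun j => ?_⟩
  rw [even_iff_zmod2]
  have h1 : (psi 𝓑 Cgen T).filter (fun B => j ∈ B)
      = (𝓑.filter (fun B => j ∈ B)).filter
          (fun B => Odd ((T.filter (fun i => B ∈ Cgen i)).card)) := by
    ext B
    simp only [psi, Finset.mem_filter]
    tauto
  rw [h1, zmod2_card_filter_odd]
  have h2 : ∀ B : Finset Λ, ((T.filter (fun i => B ∈ Cgen i)).card : ZMod 2)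
      = ∑ i ∈ T, if B ∈ Cgen i then (1 : ZMod 2) else 0 := by
    intro B
    rw [Finset.card_filter, Nat.cast_sum]
    exact Finset.sum_congr rfl fun i _ => by split <;> simp
  calc ∑ B ∈ 𝓑.filter (fun B => j ∈ B), ((T.filter (fun i => B ∈ Cgen i)).card : ZMod 2)
      = ∑ B ∈ 𝓑.filter (fun B => j ∈ B), ∑ i ∈ T, (if B ∈ Cgen i then (1 : ZMod 2) else 0) :=
        Finset.sum_congr rfl fun B _ => h2 B
    _ = ∑ i ∈ T, ∑ B ∈ 𝓑.filter (fun B => j ∈ B), (if B ∈ Cgen i then (1 : ZMod 2) else 0) :=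
        Finset.sum_comm
    _ = ∑ i ∈ T, (((𝓑.filter (fun B => j ∈ B)).filter (fun B => B ∈ Cgen i)).card : ZMod 2) := by
        refine Finset.sum_congr rfl fun i _ => ?_
        rw [Finset.card_filter, Nat.cast_sum]
        exact (Finset.sum_congr rfl fun B _ => by split <;> simp).symm
    _ = ∑ i ∈ T, ((((Cgen i).filter (fun B => j ∈ B)).card : ZMod 2)) := by
        refine Finset.sum_congr rfl fun i _ => ?_
        congr 2
        ext B
        simp only [Finset.mem_filter]
        constructor
        · rintro ⟨⟨_, hj⟩, hc⟩; exact ⟨hc, hj⟩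
        · rintro ⟨hc, hj⟩; exact ⟨⟨hsub i hc, hj⟩, hc⟩
    _ = 0 := Finset.sum_eq_zero fun i _ => (even_iff_zmod2 _).mp (hconstraint i j)

lemma psi_symmDiff (T T' : Finset Λstar) :
    psi 𝓑 Cgen (T ∆ T') = psi 𝓑 Cgen T ∆ psi 𝓑 Cgen T' := by
  ext B
  simp only [psi, Finset.mem_symmDiff, Finset.mem_filter]
  have hf : (T ∆ T').filter (fun i => B ∈ Cgen i)
      = T.filter (fun i => B ∈ Cgen i) ∆ T'.filter (fun i => B ∈ Cgen i) := by
    ext i; simp only [Finset.mem_symmDiff, Finset.mem_filter]; tauto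
  rw [hf]
  have hparity :
      Odd ((T.filter (fun i => B ∈ Cgen i) ∆ T'.filter (fun i => B ∈ Cgen i)).card)
        ↔ Odd ((T.filter (fun i => B ∈ Cgen i)).card
            + (T'.filter (fun i => B ∈ Cgen i)).card) := by
    rw [odd_iff_zmod2, odd_iff_zmod2, zmod2_card_symmDiff, Nat.cast_add]
  rw [hparity, Nat.odd_add, ← Nat.not_odd_iff_even]
  tauto

lemma psi_surj
    (hgen : ∀ C : Finset (Finset Λ), C ⊆ 𝓑 →
      (∀ j : Λ, Even ((C.filter (fun B => j ∈ B)).card)) →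
      ∃ T : Finset Λstar, ∀ B : Finset Λ,
        B ∈ C ↔ Odd ((T.filter (fun i => B ∈ Cgen i)).card)) :
    ∀ C ∈ (𝓑.powerset).filter
      (fun C => ∀ j : Λ, Even ((C.filter (fun B => j ∈ B)).card)),
      ∃ T : Finset Λstar, psi 𝓑 Cgen T = C := by
  intro C hC
  rw [Finset.mem_filter, Finset.mem_powerset] at hC
  obtain ⟨T, hT⟩ := hgen C hC.1 hC.2
  refine ⟨T, ?_⟩
  ext B
  rw [psi, Finset.mem_filter, ← hT B]
  exact ⟨fun h => h.2, fun h => ⟨hC.1 h, h⟩⟩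

lemma psi_eq_empty_iff (T : Finset Λstar) :
    psi 𝓑 Cgen T = ∅
      ↔ ∀ Bs ∈ 𝓑.image (fun B => Finset.univ.filter (fun i => B ∈ Cgen i)),
          Even ((T ∩ Bs).card) := by
  rw [psi, Finset.filter_eq_empty_iff]
  constructor
  · intro h Bs hBs
    obtain ⟨B, hB, rfl⟩ := Finset.mem_image.mp hBs
    rw [← T_filter_eq]
    exact Nat.not_odd_iff_even.mp (h hB)
  · intro h B hB
    rw [T_filter_eq]
    exact Nat.not_odd_iff_even.mpr (h _ (Finset.mem_image_of_mem _ hB))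

variable (NSstar : ℕ)
  (hNSstar : Nat.card {Rs : Finset Λstar //
      ∀ Bs ∈ 𝓑.image (fun B => Finset.univ.filter (fun i => B ∈ Cgen i)),
        Even ((Rs ∩ Bs).card)} = 2 ^ NSstar)

include hNSstar in
lemma psi_ker_card :
    (Finset.univ.filter (fun T : Finset Λstar => psi 𝓑 Cgen T = ∅)).card = 2 ^ NSstar := by
  have heq : Finset.univ.filter (fun T : Finset Λstar => psi 𝓑 Cgen T = ∅)
      = Finset.univ.filter (fun T : Finset Λstar =>
          ∀ Bs ∈ 𝓑.image (fun B => Finset.univ.filter (fun i => B ∈ Cgen i)),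
            Even ((T ∩ Bs).card)) := by
    refine Finset.filter_congr fun T _ => ?_
    rw [psi_eq_empty_iff]
  rw [heq, ← Fintype.card_subtype, ← Nat.card_eq_fintype_card]
  exact hNSstar

include hNSstar in
lemma psi_fiber_card
    (hgen : ∀ C : Finset (Finset Λ), C ⊆ 𝓑 →
      (∀ j : Λ, Even ((C.filter (fun B => j ∈ B)).card)) →
      ∃ T : Finset Λstar, ∀ B : Finset Λ,
        B ∈ C ↔ Odd ((T.filter (fun i => B ∈ Cgen i)).card)) :
    ∀ C ∈ (𝓑.powerset).filter
      (fun C => ∀ j : Λ, Even ((C.filter (fun B => j ∈ B)).card)),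
      (Finset.univ.filter (fun T : Finset Λstar => psi 𝓑 Cgen T = C)).card = 2 ^ NSstar := by
  intro C hC
  obtain ⟨T₀, hT₀⟩ := psi_surj 𝓑 Cgen hgen C hC
  rw [← psi_ker_card 𝓑 Cgen NSstar hNSstar]
  refine Finset.card_bij' (fun T _ => T ∆ T₀) (fun T _ => T ∆ T₀) ?_ ?_ ?_ ?_
  · intro T hT
    rw [Finset.mem_filter] at hT ⊢
    refine ⟨Finset.mem_univ _, ?_⟩
    rw [psi_symmDiff, hT.2, hT₀, symmDiff_self]
    rfl
  · intro T hT
    rw [Finset.mem_filter] at hT ⊢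
    refine ⟨Finset.mem_univ _, ?_⟩
    rw [psi_symmDiff, hT.2, hT₀]
    simp
  · intro T _
    exact symmDiff_symmDiff_cancel_right T₀ T
  · intro T _
    exact symmDiff_symmDiff_cancel_right T₀ T

include hNSstar in
lemma psi_sum
    (hsub : ∀ i, Cgen i ⊆ 𝓑)
    (hconstraint : ∀ i, ∀ j : Λ, Even (((Cgen i).filter (fun B => j ∈ B)).card))
    (hgen : ∀ C : Finset (Finset Λ), C ⊆ 𝓑 →
      (∀ j : Λ, Even ((C.filter (fun B => j ∈ B)).card)) →
      ∃ T : Finset Λstar, ∀ B : Finset Λ,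
        B ∈ C ↔ Odd ((T.filter (fun i => B ∈ Cgen i)).card))
    (w : Finset (Finset Λ) → ℝ) :
    ∑ T : Finset Λstar, w (psi 𝓑 Cgen T)
      = 2 ^ NSstar * ∑ C ∈ (𝓑.powerset).filter
          (fun C => ∀ j : Λ, Even ((C.filter (fun B => j ∈ B)).card)), w C := by
  rw [← Finset.sum_fiberwise_of_maps_to
    (g := psi 𝓑 Cgen) (fun T _ => psi_mem 𝓑 Cgen hsub hconstraint T)
    (fun T => w (psi 𝓑 Cgen T)), Finset.mul_sum]
  refine Finset.sum_congr rfl fun C hC => ?_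
  have h1 : ∀ T ∈ Finset.univ.filter (fun T : Finset Λstar => psi 𝓑 Cgen T = C),
      w (psi 𝓑 Cgen T) = w C := by
    intro T hT
    rw [(Finset.mem_filter.mp hT).2]
  rw [Finset.sum_congr rfl h1, Finset.sum_const,
    psi_fiber_card 𝓑 Cgen NSstar hNSstar hgen C hC, nsmul_eq_mul]
  push_cast
  ring

include hNSstar in
lemma count_dual
    (hsub : ∀ i, Cgen i ⊆ 𝓑)
    (hconstraint : ∀ i, ∀ j : Λ, Even (((Cgen i).filter (fun B => j ∈ B)).card))
    (hgen : ∀ C : Finset (Finset Λ), C ⊆ 𝓑 →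
      (∀ j : Λ, Even ((C.filter (fun B => j ∈ B)).card)) →
      ∃ T : Finset Λstar, ∀ B : Finset Λ,
        B ∈ C ↔ Odd ((T.filter (fun i => B ∈ Cgen i)).card)) :
    2 ^ (Fintype.card Λstar)
      = 2 ^ NSstar * ((𝓑.powerset).filter
          (fun C => ∀ j : Λ, Even ((C.filter (fun B => j ∈ B)).card))).card := by
  have h1 := Finset.card_eq_sum_card_fiberwise
    (f := psi 𝓑 Cgen) (s := Finset.univ)
    (t := (𝓑.powerset).filter (fun C => ∀ j : Λ, Even ((C.filter (fun B => j ∈ B)).card)))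
    (fun T _ => psi_mem 𝓑 Cgen hsub hconstraint T)
  rw [Finset.card_univ, Fintype.card_finset] at h1
  rw [h1, Finset.sum_congr rfl (psi_fiber_card 𝓑 Cgen NSstar hNSstar hgen),
    Finset.sum_const, smul_eq_mul, mul_comm]

lemma Z_expansion (K : Finset Λ → ℝ) :
    (∑ R : Finset Λ, Real.exp (∑ B ∈ 𝓑, K B * (-1 : ℝ) ^ ((R ∩ B).card)))
      = (∏ B ∈ 𝓑, Real.cosh (K B)) * ((2 : ℝ) ^ (Fintype.card Λ) *
          ∑ C ∈ (𝓑.powerset).filter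
            (fun C => ∀ j : Λ, Even ((C.filter (fun B => j ∈ B)).card)),
            ∏ B ∈ C, Real.tanh (K B)) := by
  have h1 : ∀ R : Finset Λ, Real.exp (∑ B ∈ 𝓑, K B * (-1 : ℝ) ^ ((R ∩ B).card))
      = (∏ B ∈ 𝓑, Real.cosh (K B))
        * ∏ B ∈ 𝓑, (1 + (-1 : ℝ) ^ ((R ∩ B).card) * Real.tanh (K B)) := by
    intro R
    rw [Real.exp_sum,
      Finset.prod_congr rfl (fun B _ => exp_mul_neg_one_pow (K B) ((R ∩ B).card)),
      Finset.prod_mul_distrib]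
  calc ∑ R : Finset Λ, Real.exp (∑ B ∈ 𝓑, K B * (-1 : ℝ) ^ ((R ∩ B).card))
      = ∑ R : Finset Λ, (∏ B ∈ 𝓑, Real.cosh (K B))
          * ∏ B ∈ 𝓑, (1 + (-1 : ℝ) ^ ((R ∩ B).card) * Real.tanh (K B)) :=
        Finset.sum_congr rfl fun R _ => h1 R
    _ = (∏ B ∈ 𝓑, Real.cosh (K B)) * ∑ R : Finset Λ,
          ∏ B ∈ 𝓑, (1 + (-1 : ℝ) ^ ((R ∩ B).card) * Real.tanh (K B)) := by
        rw [← Finset.mul_sum]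
    _ = (∏ B ∈ 𝓑, Real.cosh (K B)) * ∑ R : Finset Λ,
          ∑ C ∈ 𝓑.powerset, ∏ B ∈ C, ((-1 : ℝ) ^ ((R ∩ B).card) * Real.tanh (K B)) := by
        congr 1
        exact Finset.sum_congr rfl fun R _ =>
          (sum_powerset_prod 𝓑 (fun B => (-1 : ℝ) ^ ((R ∩ B).card) * Real.tanh (K B))).symm
    _ = (∏ B ∈ 𝓑, Real.cosh (K B)) * ∑ C ∈ 𝓑.powerset,
          ∑ R : Finset Λ, ∏ B ∈ C, ((-1 : ℝ) ^ ((R ∩ B).card) * Real.tanh (K B)) := by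
        rw [Finset.sum_comm]
    _ = (∏ B ∈ 𝓑, Real.cosh (K B)) * ∑ C ∈ 𝓑.powerset,
          (∑ R : Finset Λ, ∏ B ∈ C, (-1 : ℝ) ^ ((R ∩ B).card))
            * ∏ B ∈ C, Real.tanh (K B) := by
        congr 1
        refine Finset.sum_congr rfl fun C _ => ?_
        exact (Finset.sum_congr rfl fun R _ => Finset.prod_mul_distrib).trans
          (Finset.sum_mul _ _ _).symm
    _ = (∏ B ∈ 𝓑, Real.cosh (K B)) * ∑ C ∈ 𝓑.powerset,
          (if (∀ j : Λ, Even ((C.filter (fun B => j ∈ B)).card))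
            then (2 : ℝ) ^ (Fintype.card Λ) * ∏ B ∈ C, Real.tanh (K B) else 0) := by
        congr 1
        refine Finset.sum_congr rfl fun C _ => ?_
        rw [sign_sum C, ite_mul, zero_mul]
    _ = (∏ B ∈ 𝓑, Real.cosh (K B)) * ∑ C ∈ (𝓑.powerset).filter
          (fun C => ∀ j : Λ, Even ((C.filter (fun B => j ∈ B)).card)),
          (2 : ℝ) ^ (Fintype.card Λ) * ∏ B ∈ C, Real.tanh (K B) := by
        rw [Finset.sum_filter]
    _ = (∏ B ∈ 𝓑, Real.cosh (K B)) * ((2 : ℝ) ^ (Fintype.card Λ) *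
          ∑ C ∈ (𝓑.powerset).filter
            (fun C => ∀ j : Λ, Even ((C.filter (fun B => j ∈ B)).card)),
            ∏ B ∈ C, Real.tanh (K B)) := by
        rw [← Finset.mul_sum]

lemma count_primal (NS : ℕ)
    (hNS : Nat.card {R : Finset Λ // ∀ B ∈ 𝓑, Even ((R ∩ B).card)} = 2 ^ NS) :
    2 ^ (Fintype.card Λ) * ((𝓑.powerset).filter
        (fun C => ∀ j : Λ, Even ((C.filter (fun B => j ∈ B)).card))).card
      = 2 ^ (𝓑.card) * 2 ^ NS := by
  have hA : ∑ C ∈ 𝓑.powerset, ∑ R : Finset Λ, ∏ B ∈ C, (-1 : ℝ) ^ ((R ∩ B).card)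
      = (2 : ℝ) ^ (Fintype.card Λ) * (((𝓑.powerset).filter
          (fun C => ∀ j : Λ, Even ((C.filter (fun B => j ∈ B)).card))).card : ℝ) := by
    rw [Finset.sum_congr rfl (fun C _ => sign_sum C), ← Finset.sum_filter,
      Finset.sum_const, nsmul_eq_mul, mul_comm]
  have hB : ∑ C ∈ 𝓑.powerset, ∑ R : Finset Λ, ∏ B ∈ C, (-1 : ℝ) ^ ((R ∩ B).card)
      = (2 : ℝ) ^ (𝓑.card) * (2 : ℝ) ^ NS := by
    rw [Finset.sum_comm, Finset.sum_congr rfl (fun R _ => sign_sum' 𝓑 R)]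
    have hS : (Finset.univ.filter
        (fun R : Finset Λ => ∀ B ∈ 𝓑, Even ((R ∩ B).card))).card = 2 ^ NS := by
      rw [← Fintype.card_subtype, ← Nat.card_eq_fintype_card]
      exact hNS
    rw [← Finset.sum_filter_add_sum_filter_not Finset.univ
      (fun R : Finset Λ => ∀ B ∈ 𝓑, Even ((R ∩ B).card))]
    rw [Finset.sum_congr rfl (fun R hR => if_pos (Finset.mem_filter.mp hR).2),
      Finset.sum_congr rfl (fun R hR => if_neg (Finset.mem_filter.mp hR).2),
      Finset.sum_const, Finset.sum_const, hS, smul_zero, add_zero, nsmul_eq_mul]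
    push_cast
    ring
  have := hA.symm.trans hB
  exact_mod_cast this

lemma dual_weight (K : Finset Λ → ℝ) (Kstar : Finset Λstar → ℝ)
    (hKstar : ∀ Bs ∈ 𝓑.image (fun B => Finset.univ.filter (fun i => B ∈ Cgen i)),
      Real.exp (-2 * Kstar Bs)
        = ∏ B ∈ 𝓑.filter (fun B => Finset.univ.filter (fun i => B ∈ Cgen i) = Bs),
            Real.tanh (K B))
    (T : Finset Λstar) :
    ∏ B ∈ psi 𝓑 Cgen T, Real.tanh (K B)
      = Real.exp (-∑ Bs ∈ 𝓑.image (fun B => Finset.univ.filter (fun i => B ∈ Cgen i)),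
            Kstar Bs)
        * Real.exp (∑ Bs ∈ 𝓑.image (fun B => Finset.univ.filter (fun i => B ∈ Cgen i)),
            Kstar Bs * (-1 : ℝ) ^ ((T ∩ Bs).card)) := by
  rw [psi, Finset.prod_filter,
    ← Finset.prod_fiberwise_of_maps_to
      (g := fun B => Finset.univ.filter (fun i => B ∈ Cgen i))
      (fun B hB => Finset.mem_image_of_mem _ hB)
      (fun B => if Odd ((T.filter (fun i => B ∈ Cgen i)).card) then Real.tanh (K B) else 1)]
  calc ∏ Bs ∈ 𝓑.image (fun B => Finset.univ.filter (fun i => B ∈ Cgen i)),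
        ∏ B ∈ 𝓑.filter (fun B => Finset.univ.filter (fun i => B ∈ Cgen i) = Bs),
          (if Odd ((T.filter (fun i => B ∈ Cgen i)).card) then Real.tanh (K B) else 1)
      = ∏ Bs ∈ 𝓑.image (fun B => Finset.univ.filter (fun i => B ∈ Cgen i)),
          (if Odd ((T ∩ Bs).card) then Real.exp (-2 * Kstar Bs) else 1) := by
        refine Finset.prod_congr rfl fun Bs hBs => ?_
        by_cases h : Odd ((T ∩ Bs).card)
        · rw [if_pos h, hKstar Bs hBs]
          refine Finset.prod_congr rfl fun B hB => ?_
          have hfb := (Finset.mem_filter.mp hB).2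
          have hcd : (T.filter (fun i => B ∈ Cgen i)).card = (T ∩ Bs).card := by
            rw [T_filter_eq Cgen, hfb]
          rw [hcd, if_pos h]
        · rw [if_neg h]
          refine Finset.prod_eq_one fun B hB => ?_
          have hfb := (Finset.mem_filter.mp hB).2
          have hcd : (T.filter (fun i => B ∈ Cgen i)).card = (T ∩ Bs).card := by
            rw [T_filter_eq Cgen, hfb]
          rw [hcd, if_neg h]
    _ = ∏ Bs ∈ 𝓑.image (fun B => Finset.univ.filter (fun i => B ∈ Cgen i)),
          Real.exp (-(Kstar Bs) + Kstar Bs * (-1 : ℝ) ^ ((T ∩ Bs).card)) := by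
        refine Finset.prod_congr rfl fun Bs _ => ?_
        by_cases h : Odd ((T ∩ Bs).card)
        · rw [if_pos h, h.neg_one_pow]
          congr 1
          ring
        · rw [if_neg h, (Nat.not_odd_iff_even.mp h).neg_one_pow, mul_one,
            neg_add_cancel, Real.exp_zero]
    _ = Real.exp (-∑ Bs ∈ 𝓑.image (fun B => Finset.univ.filter (fun i => B ∈ Cgen i)),
            Kstar Bs)
        * Real.exp (∑ Bs ∈ 𝓑.image (fun B => Finset.univ.filter (fun i => B ∈ Cgen i)),
            Kstar Bs * (-1 : ℝ) ^ ((T ∩ Bs).card)) := by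
        rw [← Real.exp_sum, Finset.sum_add_distrib, Real.exp_add, Finset.sum_neg_distrib]

lemma expKstar (K : Finset Λ → ℝ) (hK : ∀ B ∈ 𝓑, 0 < K B) (Kstar : Finset Λstar → ℝ)
    (hKstar : ∀ Bs ∈ 𝓑.image (fun B => Finset.univ.filter (fun i => B ∈ Cgen i)),
      Real.exp (-2 * Kstar Bs)
        = ∏ B ∈ 𝓑.filter (fun B => Finset.univ.filter (fun i => B ∈ Cgen i) = Bs),
            Real.tanh (K B)) :
    Real.exp (-∑ Bs ∈ 𝓑.image (fun B => Finset.univ.filter (fun i => B ∈ Cgen i)),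
        Kstar Bs)
      = ∏ B ∈ 𝓑, Real.sqrt (Real.tanh (K B)) := by
  rw [← Finset.prod_fiberwise_of_maps_to
    (g := fun B => Finset.univ.filter (fun i => B ∈ Cgen i))
    (fun B hB => Finset.mem_image_of_mem _ hB)
    (fun B => Real.sqrt (Real.tanh (K B))),
    ← Finset.sum_neg_distrib, Real.exp_sum]
  refine Finset.prod_congr rfl fun Bs hBs => ?_
  have h2 : Real.exp (-Kstar Bs) = Real.sqrt (Real.exp (-2 * Kstar Bs)) := by
    rw [show (-2 : ℝ) * Kstar Bs = (-Kstar Bs) + (-Kstar Bs) by ring, Real.exp_add,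
      Real.sqrt_mul_self (Real.exp_nonneg _)]
  rw [h2, hKstar Bs hBs, sqrt_prod']
  intro B hB
  have hBmem : B ∈ 𝓑 := (Finset.mem_filter.mp hB).1
  rw [Real.tanh_eq_sinh_div_cosh]
  exact div_nonneg (Real.sinh_nonneg_iff.mpr (hK B hBmem).le) (Real.cosh_pos _).le

lemma sqrt_sinh_two_mul (x : ℝ) (hx : 0 < x) :
    Real.sqrt (Real.sinh (2 * x))
      = Real.sqrt 2 * Real.sqrt (Real.tanh x) * Real.cosh x := by
  have htanh : (0 : ℝ) ≤ Real.tanh x := by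
    rw [Real.tanh_eq_sinh_div_cosh]
    exact div_nonneg (Real.sinh_nonneg_iff.mpr hx.le) (Real.cosh_pos _).le
  have h1 : Real.sinh (2 * x) = 2 * Real.tanh x * Real.cosh x ^ 2 := by
    rw [Real.sinh_two_mul, Real.tanh_eq_sinh_div_cosh]
    field_simp
  rw [h1, Real.sqrt_mul (by positivity), Real.sqrt_mul (by norm_num : (0:ℝ) ≤ 2),
    Real.sqrt_sq (Real.cosh_pos x).le]

end s3
end MerlGru


/-- **Merlini–Gruber duality of partition functions.**
Let `(Λ, K)` be a finite generalized Ising model with interaction supports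
`𝓑` and couplings `K_B > 0`. Let `{C_i}_{i ∈ Λ*}` be a generating set of the
constraint group (each `C_i ⊆ 𝓑` with every site covered an even number of
times, and every constraint a symmetric-difference combination of the `C_i`),
let `φ(B) = {i : B ∈ C_i}` be the dual interaction sets, and let the dual
couplings satisfy `e^{-2K*_{B*}} = ∏_{B ∈ φ⁻¹(B*)} tanh K_B`. If `2^{N_S}` and
`2^{N_{S*}}` are the orders of the symmetry groups of the two models, then
`Z(Λ,K) = √2^{|Λ| - |Λ*| + N_S - N_{S*}} · ∏_{B∈𝓑} √(sinh 2K_B) · Z(Λ*,K*)`. -/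
theorem merlini_gruber_duality
    {Λ : Type*} [Fintype Λ] [DecidableEq Λ]
    {Λstar : Type*} [Fintype Λstar] [DecidableEq Λstar]
    (𝓑 : Finset (Finset Λ)) (K : Finset Λ → ℝ) (hK : ∀ B ∈ 𝓑, 0 < K B)
    (Cgen : Λstar → Finset (Finset Λ))
    (hsub : ∀ i, Cgen i ⊆ 𝓑)
    (hconstraint : ∀ i, ∀ j : Λ, Even (((Cgen i).filter (fun B => j ∈ B)).card))
    (hgen : ∀ C : Finset (Finset Λ), C ⊆ 𝓑 →
      (∀ j : Λ, Even ((C.filter (fun B => j ∈ B)).card)) →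
      ∃ T : Finset Λstar, ∀ B : Finset Λ,
        B ∈ C ↔ Odd ((T.filter (fun i => B ∈ Cgen i)).card))
    (Kstar : Finset Λstar → ℝ)
    (hKstar : ∀ Bs ∈ 𝓑.image (fun B => Finset.univ.filter (fun i => B ∈ Cgen i)),
      Real.exp (-2 * Kstar Bs)
        = ∏ B ∈ 𝓑.filter (fun B => Finset.univ.filter (fun i => B ∈ Cgen i) = Bs),
            Real.tanh (K B))
    (NS NSstar : ℕ)
    (hNS : Nat.card {R : Finset Λ // ∀ B ∈ 𝓑, Even ((R ∩ B).card)} = 2 ^ NS)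
    (hNSstar : Nat.card {Rs : Finset Λstar //
      ∀ Bs ∈ 𝓑.image (fun B => Finset.univ.filter (fun i => B ∈ Cgen i)),
        Even ((Rs ∩ Bs).card)} = 2 ^ NSstar) :
    isingZ 𝓑 K
      = Real.sqrt 2 ^
          ((Fintype.card Λ : ℤ) - (Fintype.card Λstar : ℤ) + (NS : ℤ) - (NSstar : ℤ))
        * (∏ B ∈ 𝓑, Real.sqrt (Real.sinh (2 * K B)))
        * isingZ (𝓑.image (fun B => Finset.univ.filter (fun i => B ∈ Cgen i))) Kstar := by
  -- dimension identity
  have hdim : Fintype.card Λ + Fintype.card Λstar = 𝓑.card + NS + NSstar := by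
    have h1 := MerlGru.count_primal 𝓑 NS hNS
    have h2 := MerlGru.count_dual 𝓑 Cgen NSstar hNSstar hsub hconstraint hgen
    have h3 : (2 : ℕ) ^ (Fintype.card Λ + Fintype.card Λstar)
        = 2 ^ (𝓑.card + NS + NSstar) := by
      rw [pow_add, h2, pow_add, pow_add]
      calc (2:ℕ) ^ Fintype.card Λ * (2 ^ NSstar * ((𝓑.powerset).filter
            (fun C => ∀ j : Λ, Even ((C.filter (fun B => j ∈ B)).card))).card)
          = (2 ^ Fintype.card Λ * ((𝓑.powerset).filter
              (fun C => ∀ j : Λ, Even ((C.filter (fun B => j ∈ B)).card))).card)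
            * 2 ^ NSstar := by ring
        _ = 2 ^ 𝓑.card * 2 ^ NS * 2 ^ NSstar := by rw [h1]
    exact Nat.pow_right_injective (le_refl 2) h3
  have hs2 : (0 : ℝ) < Real.sqrt 2 := Real.sqrt_pos.mpr (by norm_num)
  set z : ℤ := (Fintype.card Λ : ℤ) - (Fintype.card Λstar : ℤ) + (NS : ℤ) - (NSstar : ℤ)
    with hzdef
  -- power bookkeeping
  have hpow : (2 : ℝ) ^ (Fintype.card Λ)
      = Real.sqrt 2 ^ z * Real.sqrt 2 ^ (𝓑.card) * (2 : ℝ) ^ NSstar := by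
    have hz : z + (𝓑.card : ℤ) = 2 * ((Fintype.card Λ : ℤ) - (NSstar : ℤ)) := by
      rw [hzdef]
      have : (Fintype.card Λ : ℤ) + (Fintype.card Λstar : ℤ)
          = (𝓑.card : ℤ) + NS + NSstar := by exact_mod_cast hdim
      omega
    have e1 : Real.sqrt 2 ^ z * Real.sqrt 2 ^ (𝓑.card)
        = (2 : ℝ) ^ ((Fintype.card Λ : ℤ) - (NSstar : ℤ)) := by
      rw [← zpow_natCast (Real.sqrt 2) 𝓑.card, ← zpow_add₀ hs2.ne', hz, zpow_mul]
      congr 1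
      rw [zpow_two, Real.mul_self_sqrt (by norm_num : (0:ℝ) ≤ 2)]
    rw [e1, ← zpow_natCast (2 : ℝ) NSstar, ← zpow_add₀ (by norm_num : (2:ℝ) ≠ 0),
      sub_add_cancel, zpow_natCast]
  -- expansion of Z
  have hsum : (2 : ℝ) ^ NSstar * ∑ C ∈ (𝓑.powerset).filter
        (fun C => ∀ j : Λ, Even ((C.filter (fun B => j ∈ B)).card)),
        ∏ B ∈ C, Real.tanh (K B)
      = (∏ B ∈ 𝓑, Real.sqrt (Real.tanh (K B)))
        * ∑ T : Finset Λstar,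
            Real.exp (∑ Bs ∈ 𝓑.image (fun B => Finset.univ.filter (fun i => B ∈ Cgen i)),
              Kstar Bs * (-1 : ℝ) ^ ((T ∩ Bs).card)) := by
    rw [← MerlGru.psi_sum 𝓑 Cgen NSstar hNSstar hsub hconstraint hgen
      (fun C => ∏ B ∈ C, Real.tanh (K B))]
    rw [Finset.sum_congr rfl (fun T _ => MerlGru.dual_weight 𝓑 Cgen K Kstar hKstar T),
      ← Finset.mul_sum, MerlGru.expKstar 𝓑 Cgen K hK Kstar hKstar]
  have hsinh : ∏ B ∈ 𝓑, Real.sqrt (Real.sinh (2 * K B))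
      = Real.sqrt 2 ^ 𝓑.card
        * ((∏ B ∈ 𝓑, Real.sqrt (Real.tanh (K B))) * ∏ B ∈ 𝓑, Real.cosh (K B)) := by
    rw [Finset.prod_congr rfl (fun B hB => MerlGru.sqrt_sinh_two_mul (K B) (hK B hB)),
      Finset.prod_mul_distrib, Finset.prod_mul_distrib, Finset.prod_const]
    ring
  simp only [isingZ]
  rw [MerlGru.Z_expansion 𝓑 K, hsinh, hpow]
  linear_combination ((∏ B ∈ 𝓑, Real.cosh (K B))
    * (Real.sqrt 2 ^ z * Real.sqrt 2 ^ 𝓑.card)) * hsum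
end

section
/- In terms of the linear lattice size L = b^l, the number of qubits of the level-l fractal product code scales as Θ(L^{2d}) where d = ln(b^2-c^2)/ln(b) is the dimension of the Sierpinski carpet SC(b,c); in particular, if d ≤ 3/2 then n(l) = O(L^3). -/
/-- Closed-form vertex count `|V(l)|` of the level-`l` Sierpinski carpet graph. -/
noncomputable def scV (b c : ℕ) (l : ℕ) : ℝ :=
  ((b : ℝ) ^ 2 - (c : ℝ) ^ 2) ^ l
    + 2 * c * ((b : ℝ) ^ l - ((b : ℝ) ^ 2 - (c : ℝ) ^ 2) ^ l)
        / ((b : ℝ) - ((b : ℝ) ^ 2 - (c : ℝ) ^ 2))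
    - (1 - ((b : ℝ) ^ 2 - (c : ℝ) ^ 2) ^ l) / (1 - ((b : ℝ) ^ 2 - (c : ℝ) ^ 2))
    + 2 * (b : ℝ) ^ l + 1

/-- Closed-form edge count `|E(l)|` of the level-`l` Sierpinski carpet graph. -/
noncomputable def scE (b c : ℕ) (l : ℕ) : ℝ :=
  2 * ((b : ℝ) ^ 2 - (c : ℝ) ^ 2) ^ l
    + 2 * c * ((b : ℝ) ^ l - ((b : ℝ) ^ 2 - (c : ℝ) ^ 2) ^ l)
        / ((b : ℝ) - ((b : ℝ) ^ 2 - (c : ℝ) ^ 2))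
    + 2 * (b : ℝ) ^ l

/-- Closed-form interior plaquette count `|P_i(l)|`. -/
noncomputable def scP (b c : ℕ) (l : ℕ) : ℝ := ((b : ℝ) ^ 2 - (c : ℝ) ^ 2) ^ l

/-- The number of physical qubits `n(l) = |V(l)|² + |E(l)|² + |P_i(l)|²` of the
level-`l` fractal product code. -/
noncomputable def nFPC (b c : ℕ) (l : ℕ) : ℝ :=
  scV b c l ^ 2 + scE b c l ^ 2 + scP b c l ^ 2

/-- The number of encoded qubits
`k(l) = 1 + ((1-(b²-c²)^l)/(1-(b²-c²)))²` of the level-`l` fractal product code. -/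
noncomputable def kFPC (b c : ℕ) (l : ℕ) : ℝ :=
  1 + ((1 - ((b : ℝ) ^ 2 - (c : ℝ) ^ 2) ^ l) / (1 - ((b : ℝ) ^ 2 - (c : ℝ) ^ 2))) ^ 2

/-- **Qubit count in terms of the linear lattice size.**
With `L = b^l` the linear lattice size and `d = log(b²-c²)/log b` the dimension
of the Sierpinski carpet `SC(b,c)`, the number of physical qubits of the level-`l`
fractal product code scales as `Θ(L^{2d})`; in particular if `d ≤ 3/2` then
`n(l) = O(L³)`. -/
theorem fpc_qubits_linear_size_scaling (b c : ℕ) (hb : 2 ≤ b) (hc : 1 ≤ c)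
    (hcb : c < b) (heven : Even (b - c)) :
    (∃ c₁ c₂ : ℝ, ∃ l₀ : ℕ, 0 < c₁ ∧ c₁ ≤ c₂ ∧ ∀ l ≥ l₀,
      c₁ * ((b : ℝ) ^ l) ^ (2 * (Real.log ((b : ℝ) ^ 2 - (c : ℝ) ^ 2) / Real.log b))
          ≤ nFPC b c l ∧
        nFPC b c l
          ≤ c₂ * ((b : ℝ) ^ l) ^ (2 * (Real.log ((b : ℝ) ^ 2 - (c : ℝ) ^ 2) / Real.log b))) ∧
    (Real.log ((b : ℝ) ^ 2 - (c : ℝ) ^ 2) / Real.log b ≤ 3 / 2 →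
      ∃ C : ℝ, ∃ l₀ : ℕ, 0 < C ∧ ∀ l ≥ l₀,
        nFPC b c l ≤ C * ((b : ℝ) ^ l) ^ (3 : ℕ)) := by
  have hb2 : (2:ℝ) ≤ (b:ℝ) := by exact_mod_cast hb
  have hb1 : (1:ℝ) < (b:ℝ) := by linarith
  have hc1 : (1:ℝ) ≤ (c:ℝ) := by exact_mod_cast hc
  have hcb' : (c:ℝ) + 1 ≤ (b:ℝ) := by exact_mod_cast hcb
  set A : ℝ := (b:ℝ)^2 - (c:ℝ)^2 with hAdef
  have hAb : (b:ℝ) + 1 ≤ A := by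
    nlinarith [mul_self_le_mul_self (by linarith : (0:ℝ) ≤ (c:ℝ))
      (by linarith : (c:ℝ) ≤ (b:ℝ) - 1)]
  have hA2 : (2:ℝ) ≤ A := by linarith
  have hApos : (0:ℝ) < A := by linarith
  -- rpow identity
  have hrpow : ∀ l : ℕ, ((b:ℝ)^l) ^ (2 * (Real.log A / Real.log b)) = (A ^ l) ^ 2 := by
    intro l
    have hbp : (0:ℝ) < (b:ℝ) := by linarith
    have hlb : Real.log (b:ℝ) ≠ 0 := ne_of_gt (Real.log_pos hb1)
    rw [show ((A:ℝ) ^ l) ^ 2 = A ^ (l * 2) by rw [pow_mul],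
        ← Real.rpow_natCast A (l * 2), ← Real.rpow_natCast ((b:ℝ)) l,
        ← Real.rpow_mul hbp.le, Real.rpow_def_of_pos hbp, Real.rpow_def_of_pos hApos]
    congr 1
    push_cast
    field_simp
  -- bounds on the pieces
  have bounds : ∀ l : ℕ,
      (A ^ l) ^ 2 ≤ nFPC b c l ∧
      nFPC b c l ≤ ((5 + 2*(c:ℝ))^2 + (4 + 2*(c:ℝ))^2 + 1) * (A ^ l) ^ 2 := by
    intro l
    have hAl1 : (1:ℝ) ≤ A ^ l := one_le_pow₀ (by linarith)
    have hbl1 : (1:ℝ) ≤ (b:ℝ) ^ l := one_le_pow₀ (by linarith)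
    have hbl : (b:ℝ) ^ l ≤ A ^ l := pow_le_pow_left₀ (by linarith) (by linarith) l
    have hbAneg : (b:ℝ) - A < 0 := by linarith
    have h1Aneg : (1:ℝ) - A < 0 := by linarith
    -- the geometric-sum term
    have hg0 : 0 ≤ 2 * (c:ℝ) * ((b:ℝ) ^ l - A ^ l) / ((b:ℝ) - A) := by
      rw [div_nonneg_iff]
      right
      refine ⟨?_, by linarith⟩
      have := mul_nonneg (by linarith : (0:ℝ) ≤ 2 * (c:ℝ))
        (by linarith : (0:ℝ) ≤ A ^ l - (b:ℝ) ^ l)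
      nlinarith
    have hg1 : 2 * (c:ℝ) * ((b:ℝ) ^ l - A ^ l) / ((b:ℝ) - A) ≤ 2 * (c:ℝ) * A ^ l := by
      rw [div_le_iff_of_neg hbAneg]
      have k1 := mul_nonneg (mul_nonneg (by linarith : (0:ℝ) ≤ 2 * (c:ℝ))
        (by linarith : (0:ℝ) ≤ A ^ l)) (by linarith : (0:ℝ) ≤ A - (b:ℝ) - 1)
      have k2 := mul_nonneg (by linarith : (0:ℝ) ≤ 2 * (c:ℝ))
        (by linarith : (0:ℝ) ≤ (b:ℝ) ^ l)
      nlinarith [k1, k2]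
    have hh0 : 0 ≤ (1 - A ^ l) / (1 - A) := by
      rw [div_nonneg_iff]
      right
      constructor <;> linarith
    have hh1 : (1 - A ^ l) / (1 - A) ≤ A ^ l := by
      rw [div_le_iff_of_neg h1Aneg]
      have k1 := mul_le_mul_of_nonneg_left (show (1:ℝ) ≤ A - 1 by linarith)
        (show (0:ℝ) ≤ A ^ l by linarith)
      nlinarith [k1]
    have hVlo : (1:ℝ) ≤ scV b c l := by
      unfold scV
      rw [← hAdef]
      linarith
    have hVhi : scV b c l ≤ (5 + 2*(c:ℝ)) * A ^ l := by
      unfold scV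
      rw [← hAdef]
      have : (2:ℝ) * (c:ℝ) * A ^ l + 5 * A ^ l ≤ (5 + 2*(c:ℝ)) * A ^ l := by ring_nf; linarith
      linarith
    have hElo : (0:ℝ) ≤ scE b c l := by
      unfold scE
      rw [← hAdef]
      positivity
    have hEhi : scE b c l ≤ (4 + 2*(c:ℝ)) * A ^ l := by
      unfold scE
      rw [← hAdef]
      have : (2:ℝ) * (c:ℝ) * A ^ l + 4 * A ^ l ≤ (4 + 2*(c:ℝ)) * A ^ l := by ring_nf; linarith
      linarith
    have hP : scP b c l = A ^ l := by unfold scP; rw [← hAdef]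
    constructor
    · unfold nFPC
      rw [hP]
      linarith [sq_nonneg (scV b c l), sq_nonneg (scE b c l)]
    · unfold nFPC
      rw [hP]
      have h1 : scV b c l ^ 2 ≤ ((5 + 2*(c:ℝ)) * A ^ l) ^ 2 :=
        pow_le_pow_left₀ (by linarith) hVhi 2
      have h2 : scE b c l ^ 2 ≤ ((4 + 2*(c:ℝ)) * A ^ l) ^ 2 :=
        pow_le_pow_left₀ hElo hEhi 2
      rw [mul_pow] at h1 h2
      linarith
  constructor
  · refine ⟨1, (5 + 2*(c:ℝ))^2 + (4 + 2*(c:ℝ))^2 + 1, 0, one_pos, by nlinarith, ?_⟩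
    intro l _
    rw [hrpow l]
    exact ⟨by simpa using (bounds l).1, (bounds l).2⟩
  · intro hd
    refine ⟨(5 + 2*(c:ℝ))^2 + (4 + 2*(c:ℝ))^2 + 1, 0, by positivity, ?_⟩
    intro l _
    have hC : (0:ℝ) ≤ (5 + 2*(c:ℝ))^2 + (4 + 2*(c:ℝ))^2 + 1 := by positivity
    have hbl1 : (1:ℝ) ≤ (b:ℝ) ^ l := one_le_pow₀ (by linarith)
    have h3 : ((b:ℝ)^l) ^ (2 * (Real.log A / Real.log b)) ≤ ((b:ℝ)^l) ^ ((3:ℕ):ℝ) := by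
      apply Real.rpow_le_rpow_of_exponent_le hbl1
      push_cast
      linarith
    rw [Real.rpow_natCast] at h3
    calc nFPC b c l ≤ ((5 + 2*(c:ℝ))^2 + (4 + 2*(c:ℝ))^2 + 1) * (A ^ l) ^ 2 := (bounds l).2
      _ = ((5 + 2*(c:ℝ))^2 + (4 + 2*(c:ℝ))^2 + 1) * ((b:ℝ)^l) ^ (2 * (Real.log A / Real.log b)) := by
          rw [hrpow l]
      _ ≤ _ := by exact mul_le_mul_of_nonneg_left h3 hC
end
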